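/- For every nonnegative integer k, (q^2-1)·C_{4,12k+1}(q) = (q^{12k+2}-1)·(∑_{i=0}^{4k} q^{3i})·(∑_{j=0}^{3k} q^{4j}), where C_{4,n}(q) = (1/[n+4]_q)·qbinom(n+4,n). -/

import Mathlib

set_option maxHeartbeats 1600000


open Polynomial

noncomputable def q : RatFunc ℚ := RatFunc.X

noncomputable def qint (t : RatFunc ℚ) (k : ℕ) : RatFunc ℚ := (1 - t ^ k) / (1 - t)

noncomputable def qfact (t : RatFunc ℚ) : ℕ → RatFunc ℚ
  | 0 => 1
  | k + 1 => qint t (k + 1) * qfact t k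

noncomputable def qbinom (t : RatFunc ℚ) (a b : ℕ) : RatFunc ℚ :=
  qfact t a / (qfact t b * qfact t (a - b))

noncomputable def qCat (t : RatFunc ℚ) (m n : ℕ) : RatFunc ℚ :=
  (qint t (m + n))⁻¹ * qbinom t (m + n) n

lemma q_pow_ne_one (n : ℕ) (hn : 0 < n) : q ^ n ≠ 1 := by
  intro h
  have : (algebraMap (Polynomial ℚ) (RatFunc ℚ)) (Polynomial.X ^ n) = algebraMap (Polynomial ℚ) (RatFunc ℚ) 1 := by
    simpa [q, RatFunc.algebraMap_X] using h
  have := RatFunc.algebraMap_injective (K := ℚ) this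
  have h2 := congrArg (fun p => p.coeff 0) this
  simp [Polynomial.coeff_X_pow] at h2
  exact hn.ne' h2.symm

lemma one_sub_q_pow_ne (n : ℕ) (hn : 0 < n) : (1 : RatFunc ℚ) - q ^ n ≠ 0 :=
  sub_ne_zero.mpr fun h => q_pow_ne_one n hn h.symm

lemma one_sub_q_ne : (1 : RatFunc ℚ) - q ≠ 0 := by
  simpa using one_sub_q_pow_ne 1 one_pos

lemma qint_ne (n : ℕ) (hn : 0 < n) : qint q n ≠ 0 :=
  div_ne_zero (one_sub_q_pow_ne n hn) one_sub_q_ne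

lemma qfact_ne (n : ℕ) : qfact q n ≠ 0 := by
  induction n with
  | zero => simp [qfact]
  | succ m ih => exact mul_ne_zero (qint_ne _ m.succ_pos) ih

lemma qfact_succ (n : ℕ) : qfact q (n + 1) = qint q (n + 1) * qfact q n := rfl

lemma qCat_eq (k : ℕ) : qCat q 4 (12 * k + 1)
    = (qint q (12*k+4) * qint q (12*k+3) * qint q (12*k+2)) /
      (qint q 4 * qint q 3 * qint q 2) := by
  rw [qCat, qbinom]
  have e1 : 4 + (12 * k + 1) = 12*k+4+1 := by ring
  have e2 : 12*k+4+1 - (12*k+1) = 3+1 := by omega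
  rw [e1, e2, qfact_succ]
  rw [show 12*k+4 = 12*k+3+1 from rfl, qfact_succ]
  rw [show 12*k+3 = 12*k+2+1 from rfl, qfact_succ]
  rw [show 12*k+2 = 12*k+1+1 from rfl, qfact_succ]
  rw [qfact_succ, show (3:ℕ) = 2+1 from rfl, qfact_succ,
      show (2:ℕ) = 1+1 from rfl, qfact_succ, show (1:ℕ) = 0+1 from rfl, qfact_succ]
  simp only [qfact]
  ring_nf
  have a5 : qint q (5 + k*12) ≠ 0 := qint_ne _ (by omega)
  have a4 : qint q (4 + k*12) ≠ 0 := qint_ne _ (by omega)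
  have a3 : qint q (3 + k*12) ≠ 0 := qint_ne _ (by omega)
  have a2 : qint q (2 + k*12) ≠ 0 := qint_ne _ (by omega)
  have a1 : qint q (1 + k*12) ≠ 0 := qint_ne _ (by omega)
  have hf : qfact q (k*12) ≠ 0 := qfact_ne _
  have c4 : qint q 4 ≠ 0 := qint_ne _ (by omega)
  have c3 : qint q 3 ≠ 0 := qint_ne _ (by omega)
  have c2 : qint q 2 ≠ 0 := qint_ne _ (by omega)
  have hq1 : qint q 1 = 1 := by rw [qint, pow_one]; exact div_self one_sub_q_ne
  rw [hq1]
  field_simp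

theorem stmt_8 (k : ℕ) :
    (q ^ 2 - 1) * qCat q 4 (12 * k + 1)
      = (q ^ (12 * k + 2) - 1) * (∑ i ∈ Finset.range (4 * k + 1), q ^ (3 * i))
          * (∑ j ∈ Finset.range (3 * k + 1), q ^ (4 * j)) := by
  have h3 : (q:RatFunc ℚ)^3 ≠ 1 := q_pow_ne_one 3 (by norm_num)
  have h4 : (q:RatFunc ℚ)^4 ≠ 1 := q_pow_ne_one 4 (by norm_num)
  have hs1 : (∑ i ∈ Finset.range (4 * k + 1), q ^ (3 * i))
      = ((q^3) ^ (4*k+1) - 1) / (q^3 - 1) := by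
    rw [← geom_sum_eq h3]
    exact Finset.sum_congr rfl fun i _ => by rw [pow_mul]
  have hs2 : (∑ j ∈ Finset.range (3 * k + 1), q ^ (4 * j))
      = ((q^4) ^ (3*k+1) - 1) / (q^4 - 1) := by
    rw [← geom_sum_eq h4]
    exact Finset.sum_congr rfl fun j _ => by rw [pow_mul]
  rw [qCat_eq, hs1, hs2]
  simp only [qint]
  have h1 := one_sub_q_ne
  have n2 := one_sub_q_pow_ne 2 (by norm_num)
  have n3 := one_sub_q_pow_ne 3 (by norm_num)
  have n4 := one_sub_q_pow_ne 4 (by norm_num)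
  have n4' := one_sub_q_pow_ne (12*k+4) (by omega)
  have n3' := one_sub_q_pow_ne (12*k+3) (by omega)
  have n2' := one_sub_q_pow_ne (12*k+2) (by omega)
  have h3' : (q:RatFunc ℚ)^3 - 1 ≠ 0 := sub_ne_zero.mpr h3
  have h4' : (q:RatFunc ℚ)^4 - 1 ≠ 0 := sub_ne_zero.mpr h4
  field_simp
  ring
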